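/- Let (T,λ) be an edge-labeled tree explaining ε, and let x, y, z ∈ X be pairwise distinct with ε(x,y) = ⊗ and ε(z,y) ∈ M. Then T displays the triple xy|z, i.e., lca_T(x,y) ≺_T lca_T(x,y,z). -/

import Mathlib

namespace GenFitch

/-- A rooted tree with leaf set `X`: a finite tree (acyclic connected simple
graph) with a distinguished root and an injective embedding of `X` onto the
set of vertices of degree at most one (the leaves). -/
structure RootedTree (X : Type) where
  V : Type
  fintypeV : Fintype V
  G : SimpleGraph V
  isTree : G.IsTree
  root : V
  leaf : X → V
  leaf_inj : Function.Injective leaf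
  leaf_iff : ∀ v : V, (∃ x : X, leaf x = v) ↔ (G.neighborSet v).ncard ≤ 1

namespace RootedTree

variable {X : Type}

/-- Degree of a vertex. -/
noncomputable def deg (T : RootedTree X) (v : T.V) : ℕ := (T.G.neighborSet v).ncard

/-- `v` is a leaf. -/
def IsLeaf (T : RootedTree X) (v : T.V) : Prop := ∃ x : X, T.leaf x = v

/-- `T` is phylogenetic: the root is an inner vertex of degree at least 2 and
every other inner vertex has degree at least 3. -/
def Phylo (T : RootedTree X) : Prop :=
  ¬ T.IsLeaf T.root ∧ 2 ≤ T.deg T.root ∧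
    ∀ v : T.V, ¬ T.IsLeaf v → v ≠ T.root → 3 ≤ T.deg v

/-- `T` is binary: the root has degree exactly 2 and every other inner vertex
has degree exactly 3. -/
def Binary (T : RootedTree X) : Prop :=
  T.deg T.root = 2 ∧ ∀ v : T.V, ¬ T.IsLeaf v → v ≠ T.root → T.deg v = 3

/-- `u` is an ancestor of `v` (written `u ⪰_T v`): `u` lies on the (unique)
path from the root to `v`. -/
def Anc (T : RootedTree X) (u v : T.V) : Prop :=
  ∀ p : T.G.Walk T.root v, p.IsPath → u ∈ p.support

/-- `l` is the least common ancestor of the set of vertices `S`. -/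
def IsLcaSet (T : RootedTree X) (l : T.V) (S : Set T.V) : Prop :=
  (∀ v ∈ S, T.Anc l v) ∧ ∀ u : T.V, (∀ v ∈ S, T.Anc u v) → T.Anc u l

/-- `T` displays the rooted triple `xy|z`, i.e. `lca(x,y) ≺ lca(x,y,z)`. -/
def Displays (T : RootedTree X) (x y z : X) : Prop :=
  ∃ l₂ l₃ : T.V, T.IsLcaSet l₂ {T.leaf x, T.leaf y} ∧
    T.IsLcaSet l₃ {T.leaf x, T.leaf y, T.leaf z} ∧ T.Anc l₃ l₂ ∧ l₂ ≠ l₃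

end RootedTree

/-- Some edge on the (unique) path from `lca(x,y)` to `y` carries the label
`m`.  Labels are drawn from `Option L`, with `none` playing the role of `⊗`. -/
def PathHasLabel {X L : Type} (T : RootedTree X) (lam : Sym2 T.V → Option L)
    (x y : X) (m : L) : Prop :=
  ∃ l : T.V, T.IsLcaSet l {T.leaf x, T.leaf y} ∧
    ∃ p : T.G.Walk l (T.leaf y), p.IsPath ∧ ∃ e ∈ p.edges, lam e = some m

/-- The edge-labeled tree `(T,lam)` explains the map `eps`:
for all distinct `x y`, `eps x y = some m` iff some edge on the path from
`lca(x,y)` to `y` has label `m`, and `eps x y = none` (i.e. `⊗`) iff no edge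
on that path carries a label in `L`. -/
def Explains {X L : Type} (T : RootedTree X) (lam : Sym2 T.V → Option L)
    (eps : X → X → Option L) : Prop :=
  ∀ x y : X, x ≠ y →
    ((∀ m : L, eps x y = some m ↔ PathHasLabel T lam x y m) ∧
     (eps x y = none ↔ ∀ m : L, ¬ PathHasLabel T lam x y m))

/-- `eps` is tree-like: some edge-labeled phylogenetic tree explains it. -/
def TreeLike {X L : Type} (eps : X → X → Option L) : Prop :=
  ∃ (T : RootedTree X) (lam : Sym2 T.V → Option L), T.Phylo ∧ Explains T lam eps

/-- The set `X_s` for a symbol `s ∈ M ∪ {⊗}` (encoded as `s : Option M`):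
those `x` having an in-arc labeled `s` and all other in-arcs labeled `⊗` or `s`. -/
def Xset {X M : Type} (eps : X → X → Option M) (s : Option M) : Set X :=
  {x : X | ∃ z : X, z ≠ x ∧ eps z x = s ∧
    ∀ z' : X, z' ≠ z → z' ≠ x → (eps z' x = none ∨ eps z' x = s)}

/-- The sets `X_s`, `s ∈ M ∪ {⊗}`, form a quasi-partition of `X`: pairwise
disjoint, union `X`, and at most one of them empty. -/
def QuasiPartition {X M : Type} (eps : X → X → Option M) : Prop :=
  (∀ s t : Option M, s ≠ t → Disjoint (Xset eps s) (Xset eps t)) ∧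
  (⋃ s : Option M, Xset eps s) = Set.univ ∧
  {s : Option M | Xset eps s = ∅}.Subsingleton

/-- A digraph `(Y, A)` is a simple Fitch graph: it is explained by a
`{1,⊗}`-edge-labeled phylogenetic tree on `Y` (a digraph on at most one
vertex is trivially explained by the trivial tree). -/
def IsFitchGraph (Y : Type) (A : Y → Y → Prop) : Prop :=
  Subsingleton Y ∨
  ∃ (T : RootedTree Y) (lam : Sym2 T.V → Option Unit), T.Phylo ∧
    ∀ x y : Y, x ≠ y → (A x y ↔ PathHasLabel T lam x y Unit.unit)

/-- `T'` is obtained from `T` by contracting (the fibers of) `φ`; equivalently,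
`T` refines `T'`. -/
structure IsContractionMap {X : Type} (T T' : RootedTree X) (φ : T.V → T'.V) :
    Prop where
  surj : Function.Surjective φ
  root_map : φ T.root = T'.root
  leaf_map : ∀ x : X, φ (T.leaf x) = T'.leaf x
  adj_map : ∀ a b : T.V, T.G.Adj a b → φ a = φ b ∨ T'.G.Adj (φ a) (φ b)
  adj_lift : ∀ u v : T'.V, T'.G.Adj u v →
    ∃ a b : T.V, T.G.Adj a b ∧ φ a = u ∧ φ b = v
  fiber_conn : ∀ u : T'.V, (T.G.induce {a : T.V | φ a = u}).Connected

/-- `(T,lam)` is a least-resolved tree explaining `eps`: it explains `eps` and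
no tree obtained from `T` by contracting one or more edges admits an
edge-labeling explaining `eps`. -/
def LeastResolved {X M : Type} (eps : X → X → Option M) (T : RootedTree X)
    (lam : Sym2 T.V → Option M) : Prop :=
  T.Phylo ∧ Explains T lam eps ∧
    ∀ (T' : RootedTree X) (φ : T.V → T'.V) (lam' : Sym2 T'.V → Option M),
      IsContractionMap T T' φ → ¬ Function.Injective φ → T'.Phylo →
        ¬ Explains T' lam' eps

/-- The rooted triple `xy|z` is informative for `eps`. -/
def Informative {X M : Type} (eps : X → X → Option M) (x y z : X) : Prop :=
  x ≠ y ∧ x ≠ z ∧ y ≠ z ∧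
  ∃ m : M, eps z x = some m ∧ eps z y = some m ∧ eps x z = eps y z ∧
    (eps x y = none ∨ eps x y = some m) ∧
    (eps y x = none ∨ eps y x = some m) ∧
    (eps x y = none ∨ eps y x = none)

/-- `T'` (a rooted tree on `Y`, with `incl : Y → X` and vertex embedding `ι`)
is the restriction `T|Y` of `T` to the leaf set `Y`: leaves map to leaves,
the ancestor relation is preserved and reflected, the vertices of `T'`
correspond exactly to the least common ancestors of pairs of `Y`-leaves in
`T`, and the root of `T'` corresponds to the least common ancestor of all
`Y`-leaves. -/
structure IsRestriction {X Y : Type} (T : RootedTree X) (incl : Y → X)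
    (T' : RootedTree Y) (ι : T'.V → T.V) : Prop where
  inj : Function.Injective ι
  leaf_map : ∀ y : Y, ι (T'.leaf y) = T.leaf (incl y)
  anc_iff : ∀ a b : T'.V, T'.Anc a b ↔ T.Anc (ι a) (ι b)
  image : ∀ v : T.V, (∃ a : T'.V, ι a = v) ↔
      ∃ y z : Y, T.IsLcaSet v {T.leaf (incl y), T.leaf (incl z)}
  root_map : T.IsLcaSet (ι T'.root) {v : T.V | ∃ y : Y, v = T.leaf (incl y)}

section Aux

open SimpleGraph

attribute [local instance] Classical.propDecidable

variable {X : Type} (T : RootedTree X)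

/-- The canonical path from the root to `v`. -/
noncomputable def pth (v : T.V) : T.G.Walk T.root v :=
  (T.isTree.existsUnique_path T.root v).choose

lemma pth_isPath (v : T.V) : (pth T v).IsPath :=
  (T.isTree.existsUnique_path T.root v).choose_spec.1

lemma path_eq_pth {v : T.V} (p : T.G.Walk T.root v) (hp : p.IsPath) : p = pth T v :=
  (T.isTree.existsUnique_path T.root v).choose_spec.2 p hp

lemma anc_iff {u v : T.V} : T.Anc u v ↔ u ∈ (pth T v).support := by
  constructor
  · intro h; exact h _ (pth_isPath T v)
  · intro h p hp; rwa [path_eq_pth T p hp]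

lemma takeUntil_pth {u v : T.V} (h : u ∈ (pth T v).support) :
    (pth T v).takeUntil u h = pth T u :=
  path_eq_pth T _ ((pth_isPath T v).takeUntil h)

lemma endpoints_eq_of_length_zero {V : Type*} {G : SimpleGraph V} {a b : V}
    (p : G.Walk a b) (h : p.length = 0) : a = b := by
  cases p with
  | nil => rfl
  | cons h' q => simp at h

lemma anc_antisymm {a b : T.V} (hab : T.Anc a b) (hba : T.Anc b a) : a = b := by
  have ha : a ∈ (pth T b).support := (anc_iff T).1 hab
  have hb : b ∈ (pth T a).support := (anc_iff T).1 hba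
  have h1 : ((pth T b).takeUntil a ha).length + ((pth T b).dropUntil a ha).length
      = (pth T b).length := by
    rw [← Walk.length_append, Walk.take_spec]
  have h2 := Walk.length_takeUntil_le (pth T a) hb
  rw [takeUntil_pth T ha] at h1
  rw [takeUntil_pth T hb] at h2
  exact endpoints_eq_of_length_zero ((pth T b).dropUntil a ha) (by omega)

lemma anc_root (v : T.V) : T.Anc T.root v := fun q _ => q.start_mem_support

lemma exists_isLcaSet (S : Set T.V) (v₀ : T.V) (hv₀ : v₀ ∈ S) :
    ∃ l, T.IsLcaSet l S := by
  classical
  set p := pth T v₀ with hp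
  set F : Finset T.V := p.support.toFinset.filter (fun u => ∀ v ∈ S, T.Anc u v) with hF
  have hrootF : T.root ∈ F := by
    simp only [hF, Finset.mem_filter, List.mem_toFinset]
    exact ⟨p.start_mem_support, fun v _ => anc_root T v⟩
  obtain ⟨l, hlF, hmax⟩ := F.exists_max_image (fun u => p.support.idxOf u) ⟨_, hrootF⟩
  simp only [hF, Finset.mem_filter, List.mem_toFinset] at hlF
  obtain ⟨hls, hlanc⟩ := hlF
  refine ⟨l, hlanc, ?_⟩
  intro u hu
  have hus : u ∈ p.support := (anc_iff T).1 (hu v₀ hv₀)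
  have huF : u ∈ F := by
    simp only [hF, Finset.mem_filter, List.mem_toFinset]; exact ⟨hus, hu⟩
  have hle : p.support.idxOf u ≤ p.support.idxOf l := hmax u huF
  set t := (p.takeUntil l hls).support with ht
  have hsplit : p.support = t ++ (p.dropUntil l hls).support.tail := by
    conv_lhs => rw [← Walk.take_spec p hls]
    rw [Walk.support_append]
  have hlt : l ∈ t := Walk.end_mem_support _
  have hidxl : p.support.idxOf l < t.length := by
    rw [hsplit, List.idxOf_append_of_mem hlt]
    exact List.idxOf_lt_length_iff.2 hlt
  have hidxu : p.support.idxOf u < t.length := lt_of_le_of_lt hle hidxl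
  have hut : u ∈ t := by
    have h1 : p.support.idxOf u < p.support.length := List.idxOf_lt_length_iff.2 hus
    have htake : t = p.support.take t.length := by
      conv_rhs => rw [hsplit]
      exact (List.take_left (l₁ := t)).symm
    have hlen : p.support.idxOf u < (p.support.take t.length).length := by
      rw [List.length_take]; exact lt_min hidxu h1
    have : (p.support.take t.length)[p.support.idxOf u]'hlen = u := by
      rw [List.getElem_take]; exact List.getElem_idxOf h1
    rw [htake, ← this]
    exact List.getElem_mem hlen
  refine (anc_iff T).2 ?_
  rw [← takeUntil_pth T hls]
  exact hut

lemma mem_dropUntil_of_anc {a b v : T.V} (ha : a ∈ (pth T v).support)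
    (hb : b ∈ (pth T v).support) (hab : T.Anc a b) :
    b ∈ ((pth T v).dropUntil a ha).support := by
  have hmem : b ∈ ((pth T v).takeUntil a ha).support ++
      ((pth T v).dropUntil a ha).support.tail := by
    rw [← Walk.support_append, Walk.take_spec]; exact hb
  rcases List.mem_append.1 hmem with h | h
  · rw [takeUntil_pth T ha] at h
    have hba : b = a := (anc_antisymm T hab ((anc_iff T).2 h)).symm
    rw [hba]
    exact Walk.start_mem_support _
  · exact List.mem_of_mem_tail h

end Aux

theorem stmt13 {X M : Type} [Fintype X] [Fintype M] [Nonempty M]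
    (hX : 1 < Fintype.card X)
    (eps : X → X → Option M)
    (T : RootedTree X) (lam : Sym2 T.V → Option M)
    (hphylo : T.Phylo) (hexp : Explains T lam eps)
    (x y z : X) (hxy : x ≠ y) (hxz : x ≠ z) (hyz : y ≠ z)
    (h1 : eps x y = none) (h2 : ∃ m : M, eps z y = some m) :
    T.Displays x y z := by
  classical
  obtain ⟨m, hm⟩ := h2
  obtain ⟨l₂, hl₂⟩ := exists_isLcaSet T {T.leaf x, T.leaf y} (T.leaf x) (by simp)
  obtain ⟨l₃, hl₃⟩ :=
    exists_isLcaSet T {T.leaf x, T.leaf y, T.leaf z} (T.leaf x) (by simp)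
  refine ⟨l₂, l₃, hl₂, hl₃, ?_, ?_⟩
  · refine hl₂.2 l₃ (fun v hv => hl₃.1 v ?_)
    rcases hv with h | h
    · exact Or.inl h
    · exact Or.inr (Or.inl h)
  · intro heq
    have hPHL : PathHasLabel T lam z y m := ((hexp z y hyz.symm).1 m).mp hm
    obtain ⟨lzy, hlzy, q, hq, e, he, hlam⟩ := hPHL
    have h2z : T.Anc l₂ (T.leaf z) := by
      rw [heq]; exact hl₃.1 _ (Or.inr (Or.inr rfl))
    have h2y : T.Anc l₂ (T.leaf y) := hl₂.1 _ (Or.inr rfl)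
    have hanc : T.Anc l₂ lzy := by
      refine hlzy.2 l₂ (fun v hv => ?_)
      rcases hv with h | h
      · rw [h]; exact h2z
      · rw [h]; exact h2y
    set p := pth T (T.leaf y) with hpdef
    have hl2p : l₂ ∈ p.support := (anc_iff T).1 h2y
    have hlzyp : lzy ∈ p.support := (anc_iff T).1 (hlzy.1 _ (Or.inr rfl))
    have hmem : lzy ∈ (p.dropUntil l₂ hl2p).support :=
      mem_dropUntil_of_anc T hl2p hlzyp hanc
    have hdpath : (p.dropUntil l₂ hl2p).IsPath := (pth_isPath T _).dropUntil hl2p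
    have hq' : q = (p.dropUntil l₂ hl2p).dropUntil lzy hmem := by
      have h := T.isTree.IsAcyclic.path_unique ⟨q, hq⟩
        ⟨(p.dropUntil l₂ hl2p).dropUntil lzy hmem, hdpath.dropUntil hmem⟩
      exact congrArg Subtype.val h
    have he' : e ∈ (p.dropUntil l₂ hl2p).edges :=
      SimpleGraph.Walk.edges_dropUntil_subset _ hmem (hq' ▸ he)
    exact ((hexp x y hxy).2.mp h1) m
      ⟨l₂, hl₂, p.dropUntil l₂ hl2p, hdpath, e, he', hlam⟩

end GenFitch
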